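/- For fixed α > 0 define φ(a) = α^{-1} log(a/α) and Q(s; t) = Γ(t) e^{−is log t} / Γ(t − is) − 1. Then for all real s and all sufficiently large a, |Q(s + iφ(a); a/α)| ≤ 2 e^{π|s|/2}. -/

import Mathlib

open Complex Real
open Filter Finset Topology

-- |Γ(1+yi)|^2 = πy / sinh(πy)
lemma gamma_one_sq (y : ℝ) (hy : y ≠ 0) :
    ‖Complex.Gamma (1 + y * Complex.I)‖ ^ 2 = π * y / Real.sinh (π * y) := by
  have hyI : (y : ℂ) * Complex.I ≠ 0 := by
    simp [Complex.ext_iff, hy]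
  have h1 : Complex.Gamma (1 + y * Complex.I) = (y * Complex.I) * Complex.Gamma (y * Complex.I) := by
    rw [add_comm]
    exact Complex.Gamma_add_one _ hyI
  have hconj : Complex.Gamma (1 - y * Complex.I) = (starRingEnd ℂ) (Complex.Gamma (1 + y * Complex.I)) := by
    rw [← Complex.Gamma_conj]
    congr 1
    simp [Complex.ext_iff]
  have hrefl : Complex.Gamma (y * Complex.I) * Complex.Gamma (1 - y * Complex.I)
      = π / Complex.sin (π * (y * Complex.I)) := Complex.Gamma_mul_Gamma_one_sub _
  have hsin : Complex.sin ((π : ℂ) * (y * Complex.I)) = (Real.sinh (π * y) : ℂ) * Complex.I := by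
    have : (π : ℂ) * (y * Complex.I) = ((π * y : ℝ) : ℂ) * Complex.I := by push_cast; ring
    rw [this, Complex.sin_mul_I, Complex.ofReal_sinh]
  have hsinh : Real.sinh (π * y) ≠ 0 := by
    simp [Real.sinh_eq_zero, Real.pi_ne_zero, hy]
  have key : ((‖Complex.Gamma (1 + y * Complex.I)‖ ^ 2 : ℝ) : ℂ)
      = ((π * y / Real.sinh (π * y) : ℝ) : ℂ) := by
    rw [← Complex.normSq_eq_norm_sq, ← Complex.mul_conj, ← hconj, h1, mul_assoc,
      hrefl, hsin]
    have hI := Complex.I_ne_zero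
    have hs : (Real.sinh (π * y) : ℂ) ≠ 0 := by exact_mod_cast hsinh
    push_cast
    have hsh : Complex.sinh ((π : ℂ) * y) ≠ 0 := by
      rw [show ((π : ℂ) * y) = ((π * y : ℝ) : ℂ) by push_cast; ring, ← Complex.ofReal_sinh]
      exact_mod_cast hsinh
    rw [mul_comm (Complex.sinh _) Complex.I, ← div_div, Complex.div_I]
    field_simp
    ring_nf
    simp [Complex.I_sq]
  exact_mod_cast key

lemma sinh_le (u : ℝ) (hu : 0 < u) : Real.sinh u ≤ u * Real.exp u := by
  rw [Real.sinh_eq]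
  have h := Real.add_one_le_exp (-(2*u))
  have e1 : Real.exp (-u) = Real.exp u * Real.exp (-(2*u)) := by
    rw [← Real.exp_add]; ring_nf
  have e2 : Real.exp u > 0 := Real.exp_pos u
  nlinarith [Real.exp_pos (-(2*u))]

lemma gamma_one_lb (y : ℝ) : Real.exp (-(π * |y| / 2)) ≤ ‖Complex.Gamma (1 + y * Complex.I)‖ := by
  rcases eq_or_ne y 0 with rfl | hy
  · simp [Complex.Gamma_one]
  · have hsq := gamma_one_sq y hy
    have hu : 0 < π * |y| := by positivity
    have heven : π * y / Real.sinh (π * y) = π * |y| / Real.sinh (π * |y|) := by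
      rcases abs_cases y with ⟨h1, _⟩ | ⟨h1, _⟩
      · rw [h1]
      · rw [h1, show π * -y = -(π * y) by ring, Real.sinh_neg, neg_div_neg_eq]
    have hsinh_pos : 0 < Real.sinh (π * |y|) := Real.sinh_pos_iff.mpr hu
    have hkey : Real.exp (-(π * |y|)) ≤ π * |y| / Real.sinh (π * |y|) := by
      rw [le_div_iff₀ hsinh_pos]
      have h1 := sinh_le (π * |y|) hu
      have h2 : Real.exp (-(π * |y|)) * Real.exp (π * |y|) = 1 := by
        rw [← Real.exp_add]; simp
      nlinarith [Real.exp_pos (-(π * |y|))]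
    have h2 : Real.exp (-(π * |y| / 2)) ^ 2 ≤ ‖Complex.Gamma (1 + y * Complex.I)‖ ^ 2 := by
      rw [hsq, heven, ← Real.exp_nat_mul]
      convert hkey using 2
      push_cast; ring
    have h3 := Real.sqrt_le_sqrt h2
    rwa [Real.sqrt_sq (Real.exp_nonneg _), Real.sqrt_sq (norm_nonneg _)] at h3

lemma term_norm (c y : ℝ) (j : ℕ) :
    ‖(c : ℂ) + y * Complex.I + j‖ = Real.sqrt ((c + j) ^ 2 + y ^ 2) := by
  rw [show (c : ℂ) + y * Complex.I + j = ((c + j : ℝ) : ℂ) + (y : ℝ) * Complex.I by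
    push_cast; ring]
  rw [Complex.norm_add_mul_I]

lemma term_mono {u v y : ℝ} (hu : 0 < u) (huv : u ≤ v) :
    u / Real.sqrt (u ^ 2 + y ^ 2) ≤ v / Real.sqrt (v ^ 2 + y ^ 2) := by
  have hv : 0 < v := lt_of_lt_of_le hu huv
  have h1 : 0 < Real.sqrt (u ^ 2 + y ^ 2) := Real.sqrt_pos.mpr (by positivity)
  have h2 : 0 < Real.sqrt (v ^ 2 + y ^ 2) := Real.sqrt_pos.mpr (by positivity)
  rw [div_le_div_iff₀ h1 h2]
  have key : (u * Real.sqrt (v ^ 2 + y ^ 2)) ^ 2 ≤ (v * Real.sqrt (u ^ 2 + y ^ 2)) ^ 2 := by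
    rw [mul_pow, mul_pow, Real.sq_sqrt (by positivity), Real.sq_sqrt (by positivity)]
    nlinarith [sq_nonneg y, mul_self_le_mul_self hu.le huv]
  have := Real.sqrt_le_sqrt key
  rwa [Real.sqrt_sq (by positivity), Real.sqrt_sq (by positivity)] at this

lemma ratio_eq (c y : ℝ) (hc : 0 < c) {n : ℕ} (hn : n ≠ 0) :
    ∏ j ∈ Finset.range (n + 1), ((c + j) / ‖(c : ℂ) + y * Complex.I + j‖)
      = ‖Complex.GammaSeq ((c : ℂ) + y * Complex.I) n‖ / ‖Complex.GammaSeq (c : ℂ) n‖ := by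
  have hnn : (0 : ℝ) < n := by positivity
  have hcp : ∀ j : ℕ, ‖(c : ℂ) + y * Complex.I + j‖ ≠ 0 := by
    intro j
    rw [term_norm]
    positivity
  rw [Complex.GammaSeq, Complex.GammaSeq]
  rw [norm_div, norm_div, norm_mul, norm_mul]
  have e1 : ‖((n : ℂ)) ^ ((c : ℂ) + y * Complex.I)‖ = (n : ℝ) ^ c := by
    rw [show ((n : ℂ)) = (((n : ℝ)) : ℂ) by push_cast; rfl,
      Complex.norm_cpow_eq_rpow_re_of_pos hnn]
    simp
  have e2 : ‖((n : ℂ)) ^ ((c : ℂ))‖ = (n : ℝ) ^ c := by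
    rw [show ((n : ℂ)) = (((n : ℝ)) : ℂ) by push_cast; rfl,
      Complex.norm_cpow_eq_rpow_re_of_pos hnn]
    simp
  rw [e1, e2, norm_prod, norm_prod]
  rw [Finset.prod_div_distrib]
  have e3 : ∏ j ∈ Finset.range (n + 1), ‖(c : ℂ) + (j : ℂ)‖
      = ∏ j ∈ Finset.range (n + 1), (c + (j : ℝ)) := by
    refine Finset.prod_congr rfl fun j _ => ?_
    rw [show (c : ℂ) + (j : ℂ) = (((c + j : ℝ)) : ℂ) by push_cast; ring]
    rw [Complex.norm_real, Real.norm_eq_abs, abs_of_pos (by positivity)]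
  rw [e3]
  have hfac : ‖((n.factorial : ℕ) : ℂ)‖ = (n.factorial : ℝ) := by
    rw [show ((n.factorial : ℕ) : ℂ) = (((n.factorial : ℝ)) : ℂ) by push_cast; rfl,
      Complex.norm_real, Real.norm_eq_abs, abs_of_pos (by positivity)]
  have hK : (0 : ℝ) < (n : ℝ) ^ c * ‖((n.factorial : ℕ) : ℂ)‖ := by
    rw [hfac]
    positivity
  have hP : (0 : ℝ) < ∏ j ∈ Finset.range (n + 1), ‖(c : ℂ) + y * Complex.I + j‖ := by
    refine Finset.prod_pos fun j _ => ?_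
    exact lt_of_le_of_ne (norm_nonneg _) (Ne.symm (hcp j))
  have hQ : (0 : ℝ) < ∏ j ∈ Finset.range (n + 1), (c + (j : ℝ)) :=
    Finset.prod_pos fun j _ => by positivity
  have gen : ∀ K P Q : ℝ, K ≠ 0 → P ≠ 0 → Q ≠ 0 → Q / P = K / P / (K / Q) := by
    intro K P Q hK hP hQ
    field_simp
  exact gen _ _ _ hK.ne' hP.ne' hQ.ne'

lemma gamma_ratio_tendsto (c y : ℝ) (hc : 0 < c) :
    Filter.Tendsto (fun n => ∏ j ∈ Finset.range (n + 1), ((c + j) / ‖(c : ℂ) + y * Complex.I + j‖))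
      Filter.atTop (𝓝 (‖Complex.Gamma ((c : ℂ) + y * Complex.I)‖ / Real.Gamma c)) := by
  have hΓc : (0 : ℝ) < Real.Gamma c := Real.Gamma_pos_of_pos hc
  have hnorm : ‖Complex.Gamma ((c : ℂ))‖ = Real.Gamma c := by
    rw [Complex.Gamma_ofReal, Complex.norm_real, Real.norm_eq_abs, abs_of_pos hΓc]
  have t1 : Filter.Tendsto (fun n => ‖Complex.GammaSeq ((c : ℂ) + y * Complex.I) n‖)
      Filter.atTop (𝓝 ‖Complex.Gamma ((c : ℂ) + y * Complex.I)‖) :=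
    (Complex.GammaSeq_tendsto_Gamma _).norm
  have t2 : Filter.Tendsto (fun n => ‖Complex.GammaSeq ((c : ℂ)) n‖)
      Filter.atTop (𝓝 (Real.Gamma c)) := by
    rw [← hnorm]
    exact (Complex.GammaSeq_tendsto_Gamma _).norm
  have t3 := t1.div t2 hΓc.ne'
  refine t3.congr' ?_
  filter_upwards [Filter.eventually_ge_atTop 1] with n hn
  exact (ratio_eq c y hc (by omega)).symm

lemma Gamma_strip {x : ℝ} (y : ℝ) (hx : 1 ≤ x) :
    Real.Gamma x * Real.exp (-(π * |y| / 2)) ≤ ‖Complex.Gamma ((x : ℂ) + y * Complex.I)‖ := by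
  have hx0 : (0 : ℝ) < x := lt_of_lt_of_le one_pos hx
  have hΓx : (0 : ℝ) < Real.Gamma x := Real.Gamma_pos_of_pos hx0
  have hmono : ∀ n : ℕ,
      ∏ j ∈ Finset.range (n + 1), ((1 + (j:ℝ)) / ‖((1:ℝ) : ℂ) + y * Complex.I + j‖)
        ≤ ∏ j ∈ Finset.range (n + 1), ((x + (j:ℝ)) / ‖(x : ℂ) + y * Complex.I + j‖) := by
    intro n
    refine Finset.prod_le_prod (fun j _ => ?_) (fun j _ => ?_)
    · rw [term_norm]
      positivity
    · rw [term_norm, term_norm]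
      exact term_mono (by positivity) (by linarith)
  have hle := le_of_tendsto_of_tendsto' (gamma_ratio_tendsto 1 y one_pos)
    (gamma_ratio_tendsto x y hx0) hmono
  rw [Real.Gamma_one, div_one] at hle
  have h1 : Real.exp (-(π * |y| / 2)) ≤ ‖Complex.Gamma ((x : ℂ) + y * Complex.I)‖ / Real.Gamma x := by
    refine le_trans ?_ hle
    rw [show ((1:ℝ) : ℂ) + y * Complex.I = 1 + y * Complex.I by norm_num]
    exact gamma_one_lb y
  calc Real.Gamma x * Real.exp (-(π * |y| / 2))
      ≤ Real.Gamma x * (‖Complex.Gamma ((x : ℂ) + y * Complex.I)‖ / Real.Gamma x) := by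
        exact mul_le_mul_of_nonneg_left h1 hΓx.le
    _ = ‖Complex.Gamma ((x : ℂ) + y * Complex.I)‖ := by field_simp

lemma gamma_conv {t φ : ℝ} (ht : 1 ≤ t) (hφ : 1 ≤ φ) :
    Real.Gamma t * t ^ φ ≤ Real.Gamma (t + φ) := by
  have ht0 : (0 : ℝ) < t := lt_of_lt_of_le one_pos ht
  have hφ0 : (0 : ℝ) < φ := lt_of_lt_of_le one_pos hφ
  have hΓt : (0 : ℝ) < Real.Gamma t := Real.Gamma_pos_of_pos ht0
  have hΓtφ : (0 : ℝ) < Real.Gamma (t + φ) := Real.Gamma_pos_of_pos (by linarith)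
  have hb : (0 : ℝ) ≤ 1 / φ := by positivity
  have hb1 : 1 / φ ≤ 1 := by
    rw [div_le_one hφ0]; exact hφ
  have ha : (0 : ℝ) ≤ 1 - 1 / φ := by linarith
  have hab : (1 - 1 / φ) + 1 / φ = 1 := by ring
  have hconv := Real.convexOn_log_Gamma.2 (Set.mem_Ioi.mpr ht0)
    (Set.mem_Ioi.mpr (show (0:ℝ) < t + φ by linarith)) ha hb hab
  have hpt : (1 - 1 / φ) • t + (1 / φ) • (t + φ) = t + 1 := by
    simp only [smul_eq_mul]
    field_simp
    ring
  rw [hpt] at hconv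
  simp only [Function.comp_apply, smul_eq_mul] at hconv
  rw [Real.Gamma_add_one ht0.ne'] at hconv
  rw [Real.log_mul ht0.ne' hΓt.ne'] at hconv
  -- hconv : log t + log Γ t ≤ (1 - 1/φ) * log Γ t + (1/φ) * log Γ (t+φ)
  have hkey : φ * Real.log t + Real.log (Real.Gamma t) ≤ Real.log (Real.Gamma (t + φ)) := by
    have h2 : φ * (Real.log t + Real.log (Real.Gamma t))
        ≤ φ * ((1 - 1 / φ) * Real.log (Real.Gamma t) + (1 / φ) * Real.log (Real.Gamma (t + φ))) :=
      mul_le_mul_of_nonneg_left hconv hφ0.le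
    have h3 : φ * ((1 - 1 / φ) * Real.log (Real.Gamma t) + (1 / φ) * Real.log (Real.Gamma (t + φ)))
        = φ * Real.log (Real.Gamma t) - Real.log (Real.Gamma t)
          + Real.log (Real.Gamma (t + φ)) := by
      field_simp
    rw [h3] at h2
    linarith
  calc Real.Gamma t * t ^ φ
      = Real.exp (Real.log (Real.Gamma t) + φ * Real.log t) := by
        rw [Real.exp_add, Real.exp_log hΓt, Real.rpow_def_of_pos ht0, mul_comm (Real.log t) φ]
    _ ≤ Real.exp (Real.log (Real.Gamma (t + φ))) := by
        rw [Real.exp_le_exp]; linarith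
    _ = Real.Gamma (t + φ) := Real.exp_log hΓtφ

/-- For fixed `α > 0`, with `φ(a) = α⁻¹ log(a/α)` and
`Q(s; t) = Γ(t) e^{−is log t} / Γ(t − is) − 1`, for all real `s` and all sufficiently
large `a` one has `|Q(s + iφ(a); a/α)| ≤ 2 e^{π|s|/2}`. -/
theorem Q_bound (α : ℝ) (hα : 0 < α)
    (Q : ℂ → ℂ → ℂ)
    (hQ : ∀ s t : ℂ, Q s t =
      Complex.Gamma t * Complex.exp (-Complex.I * s * Complex.log t) /
        Complex.Gamma (t - Complex.I * s) - 1)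
    (φ : ℝ → ℝ) (hφ : ∀ a : ℝ, φ a = α⁻¹ * Real.log (a / α)) :
    ∃ A : ℝ, ∀ a : ℝ, A ≤ a → ∀ s : ℝ,
      ‖Q ((s : ℂ) + Complex.I * (φ a : ℂ)) ((a / α : ℝ) : ℂ)‖
        ≤ 2 * Real.exp (π * |s| / 2) := by
  refine ⟨α * Real.exp α, fun a ha s => ?_⟩
  set t : ℝ := a / α with htdef
  have ht : Real.exp α ≤ t := by
    rw [htdef, le_div_iff₀ hα]
    calc Real.exp α * α = α * Real.exp α := by ring
      _ ≤ a := ha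
  have ht1 : (1 : ℝ) ≤ t := le_trans (Real.one_le_exp hα.le) ht
  have ht0 : (0 : ℝ) < t := lt_of_lt_of_le one_pos ht1
  set p : ℝ := φ a with hpdef
  have hp : p = α⁻¹ * Real.log t := hφ a
  have hp1 : (1 : ℝ) ≤ p := by
    rw [hp]
    have hlog : α ≤ Real.log t := by
      calc α = Real.log (Real.exp α) := (Real.log_exp α).symm
        _ ≤ Real.log t := Real.log_le_log (Real.exp_pos α) ht
    calc (1 : ℝ) = α⁻¹ * α := by field_simp
      _ ≤ α⁻¹ * Real.log t := by
          exact mul_le_mul_of_nonneg_left hlog (by positivity)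
  have hp0 : (0 : ℝ) < p := lt_of_lt_of_le one_pos hp1
  have hΓt : (0 : ℝ) < Real.Gamma t := Real.Gamma_pos_of_pos ht0
  have hΓtp : (0 : ℝ) < Real.Gamma (t + p) := Real.Gamma_pos_of_pos (by linarith)
  -- rewrite Q
  rw [hQ]
  -- the denominator argument
  have harg : ((t : ℝ) : ℂ) - Complex.I * ((s : ℂ) + Complex.I * (p : ℂ))
      = ((t + p : ℝ) : ℂ) + ((-s : ℝ) : ℂ) * Complex.I := by
    push_cast
    rw [show Complex.I * ((s : ℂ) + Complex.I * (p : ℂ))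
        = Complex.I * s + (Complex.I * Complex.I) * p by ring, Complex.I_mul_I]
    ring
  -- norm of numerator
  have hnum : ‖Complex.Gamma ((t : ℝ) : ℂ) *
      Complex.exp (-Complex.I * ((s : ℂ) + Complex.I * (p : ℂ)) * Complex.log ((t : ℝ) : ℂ))‖
      = Real.Gamma t * t ^ p := by
    rw [norm_mul]
    have e1 : ‖Complex.Gamma ((t : ℝ) : ℂ)‖ = Real.Gamma t := by
      rw [Complex.Gamma_ofReal, Complex.norm_real, Real.norm_eq_abs, abs_of_pos hΓt]
    have e2 : Complex.log ((t : ℝ) : ℂ) = ((Real.log t : ℝ) : ℂ) :=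
      (Complex.ofReal_log ht0.le).symm
    have e3 : (-Complex.I * ((s : ℂ) + Complex.I * (p : ℂ)) * ((Real.log t : ℝ) : ℂ)).re
        = p * Real.log t := by
      simp [Complex.add_re, Complex.mul_re]
    rw [e1, e2, Complex.norm_exp, e3, Real.rpow_def_of_pos ht0,
      mul_comm (Real.log t) p]
  -- norm of denominator
  have hden : Real.Gamma (t + p) * Real.exp (-(π * |s| / 2))
      ≤ ‖Complex.Gamma (((t : ℝ) : ℂ) - Complex.I * ((s : ℂ) + Complex.I * (p : ℂ)))‖ := by
    rw [harg]
    have := Gamma_strip (-s) (show (1:ℝ) ≤ t + p by linarith)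
    rwa [abs_neg] at this
  have hdenpos : (0 : ℝ) < Real.Gamma (t + p) * Real.exp (-(π * |s| / 2)) := by positivity
  -- the fraction bound
  have hfrac : ‖Complex.Gamma ((t : ℝ) : ℂ) *
      Complex.exp (-Complex.I * ((s : ℂ) + Complex.I * (p : ℂ)) * Complex.log ((t : ℝ) : ℂ)) /
      Complex.Gamma (((t : ℝ) : ℂ) - Complex.I * ((s : ℂ) + Complex.I * (p : ℂ)))‖
      ≤ Real.exp (π * |s| / 2) := by
    rw [norm_div, hnum]
    calc Real.Gamma t * t ^ p /
        ‖Complex.Gamma (((t : ℝ) : ℂ) - Complex.I * ((s : ℂ) + Complex.I * (p : ℂ)))‖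
        ≤ Real.Gamma (t + p) / (Real.Gamma (t + p) * Real.exp (-(π * |s| / 2))) := by
          exact div_le_div₀ hΓtp.le (gamma_conv ht1 hp1) hdenpos hden
      _ = Real.exp (π * |s| / 2) := by
          rw [Real.exp_neg]
          field_simp
  calc ‖Complex.Gamma ((t : ℝ) : ℂ) *
      Complex.exp (-Complex.I * ((s : ℂ) + Complex.I * (p : ℂ)) * Complex.log ((t : ℝ) : ℂ)) /
      Complex.Gamma (((t : ℝ) : ℂ) - Complex.I * ((s : ℂ) + Complex.I * (p : ℂ))) - 1‖
      ≤ ‖Complex.Gamma ((t : ℝ) : ℂ) *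
      Complex.exp (-Complex.I * ((s : ℂ) + Complex.I * (p : ℂ)) * Complex.log ((t : ℝ) : ℂ)) /
      Complex.Gamma (((t : ℝ) : ℂ) - Complex.I * ((s : ℂ) + Complex.I * (p : ℂ)))‖ + ‖(1 : ℂ)‖ :=
        norm_sub_le _ _
    _ ≤ Real.exp (π * |s| / 2) + 1 := by
        rw [norm_one]
        linarith [hfrac]
    _ ≤ 2 * Real.exp (π * |s| / 2) := by
        have : (1 : ℝ) ≤ Real.exp (π * |s| / 2) := Real.one_le_exp (by positivity)
        linarith
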